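/- Let G be a finite connected graph, {F_1, …, F_k} a c-partition of E(G), and e = uv ∈ F_i. Set U = ℓ_i(u), V = ℓ_i(v), so that E = UV is an edge of G_i = G/F_i. Then N_u(e|G) = ⋃_{X ∈ N_U(E|G_i)} V(X) and N_v(e|G) = ⋃_{X ∈ N_V(E|G_i)} V(X), where the unions are over all components X of G − F_i that are closer in G_i to U (respectively to V) than to the other endpoint. -/

import Mathlib

open SimpleGraph

noncomputable section

/-- The Djoković–Winkler relation `Θ` on the edges of a graph `G`:
edges `e = xy` and `f = ab` are related iff
`d(x,a) + d(y,b) ≠ d(x,b) + d(y,a)`. -/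
def theta {V : Type*} (G : SimpleGraph V) (e f : Sym2 V) : Prop :=
  e ∈ G.edgeSet ∧ f ∈ G.edgeSet ∧
    ∃ x y a b : V, e = s(x, y) ∧ f = s(a, b) ∧
      G.dist x a + G.dist y b ≠ G.dist x b + G.dist y a

/-- The quotient graph `G/F`: its vertices are the connected components of
`G − F`, two components being adjacent iff some vertex of one is adjacent in
`G` to some vertex of the other. -/
def quotientGraph {V : Type*} (G : SimpleGraph V) (F : Set (Sym2 V)) :
    SimpleGraph (G.deleteEdges F).ConnectedComponent where
  Adj X Y := X ≠ Y ∧ ∃ x y : V,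
    (G.deleteEdges F).connectedComponentMk x = X ∧
    (G.deleteEdges F).connectedComponentMk y = Y ∧ G.Adj x y
  symm := by
    constructor
    rintro X Y ⟨hne, x, y, hx, hy, hadj⟩
    exact ⟨hne.symm, y, x, hy, hx, hadj.symm⟩
  loopless := by
    constructor
    rintro X ⟨hne, -⟩
    exact hne rfl

/-- `F₁, …, F_k` is a partition of the edge set of `G`. -/
def IsEdgePartition {V : Type*} (G : SimpleGraph V) {k : ℕ}
    (F : Fin k → Set (Sym2 V)) : Prop :=
  (∀ i, F i ⊆ G.edgeSet) ∧ (∀ e ∈ G.edgeSet, ∃ i, e ∈ F i) ∧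
    (∀ i j, i ≠ j → Disjoint (F i) (F j))

/-- `F₁, …, F_k` is a c-partition of the edge set of `G`: a partition such
that every `Θ*`-class (class of the transitive closure of `Θ`) is contained
in some part. -/
def IsCPartition {V : Type*} (G : SimpleGraph V) {k : ℕ}
    (F : Fin k → Set (Sym2 V)) : Prop :=
  IsEdgePartition G F ∧
    ∀ e f : Sym2 V, Relation.TransGen (theta G) e f → ∀ i, e ∈ F i → f ∈ F i

/-- For an edge `e = uv`, `nW G w u v` is `n_u(e|(G,w))`, the sum of the
weights of the vertices strictly closer to `u` than to `v`. -/
def nW {V : Type*} (G : SimpleGraph V) (w : V → NNReal) (u v : V) : NNReal :=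
  ∑ᶠ x ∈ {x : V | G.dist x u < G.dist x v}, w x

/-- The Mostar index of a vertex-edge-weighted graph `(G, w, w')`. -/
def MostarW {V : Type*} (G : SimpleGraph V) (w : V → NNReal)
    (w' : Sym2 V → NNReal) : ℝ :=
  ∑ᶠ e ∈ G.edgeSet, (w' e : ℝ) *
    Sym2.lift ⟨fun u v => |((nW G w u v : ℝ)) - ((nW G w v u : ℝ))|,
      fun _ _ => abs_sub_comm _ _⟩ e

/-- The (unweighted) Mostar index of a graph `G`. -/
def Mostar {V : Type*} (G : SimpleGraph V) : ℝ :=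
  ∑ᶠ e ∈ G.edgeSet,
    Sym2.lift ⟨fun u v =>
      |((Nat.card {x : V | G.dist x u < G.dist x v} : ℝ)) -
        ((Nat.card {x : V | G.dist x v < G.dist x u} : ℝ))|,
      fun _ _ => abs_sub_comm _ _⟩ e


section CutHelpers

open SimpleGraph Walk

attribute [local instance] Classical.propDecidable

variable {V : Type*} {G : SimpleGraph V}

/-- Number of edges of a walk that belong to `F`. -/
def crossCount (F : Set (Sym2 V)) {a b : V} (W : G.Walk a b) : ℕ :=
  (W.darts.filter (fun d => d.edge ∈ F)).length

/-- The potential of a dart at a vertex `z`. -/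
def dartVal (z : V) (d : G.Dart) : ℤ :=
  (G.dist z d.fst : ℤ) - (G.dist z d.snd : ℤ)

/-- The `M`-potential of a list of darts relative to `F` at `z`. -/
def mval (F : Set (Sym2 V)) (L : List G.Dart) (z : V) : ℤ :=
  ((L.filter (fun d => d.edge ∈ F)).map (dartVal z)).sum

lemma crossCount_cons (F : Set (Sym2 V)) {a b c : V} (h : G.Adj a b)
    (W : G.Walk b c) :
    crossCount F (Walk.cons h W) =
      (if s(a, b) ∈ F then 1 else 0) + crossCount F W := by
  have he : ({ toProd := (a, b), adj := h } : G.Dart).edge = s(a, b) := rfl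
  by_cases hmem : s(a, b) ∈ F
  · simp [crossCount, List.filter_cons, he, hmem, Nat.add_comm]
  · simp [crossCount, List.filter_cons, he, hmem]

lemma list_sum_map_sub {α : Type*} (L : List α) (f g : α → ℤ) :
    (L.map fun a => f a - g a).sum = (L.map f).sum - (L.map g).sum := by
  induction L with
  | nil => simp
  | cons a L ih => simp [ih]; ring

lemma list_sum_map_const {α : Type*} (L : List α) (f : α → ℤ) (c : ℤ)
    (h : ∀ a ∈ L, f a = c) : (L.map f).sum = L.length * c := by
  induction L with
  | nil => simp
  | cons a L ih =>
    simp only [List.map_cons, List.sum_cons, List.length_cons,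
      h a (by simp)]
    rw [ih (fun a ha => h a (by simp [ha]))]
    push_cast
    ring

lemma list_sum_filter_split {α : Type*} (L : List α) (p : α → Prop)
    [DecidablePred p] (f : α → ℤ) :
    ((L.filter p).map f).sum + ((L.filter fun a => ¬ p a).map f).sum
      = (L.map f).sum := by
  induction L with
  | nil => simp
  | cons a L ih =>
    by_cases hp : p a <;>
      simp [List.filter_cons, hp, ← ih] <;> ring

lemma walk_telescope {a b : V} (W : G.Walk a b) (z : V) :
    (W.darts.map (dartVal z)).sum = (G.dist z a : ℤ) - (G.dist z b : ℤ) := by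
  induction W with
  | nil => simp
  | cons h W ih =>
    simp only [Walk.darts_cons, List.map_cons, List.sum_cons, ih, dartVal]
    ring

lemma dist_lip (hG : G.Connected) {w w' : V} (h : G.Adj w w') (c : V) :
    (G.dist w' c : ℤ) - (G.dist w c : ℤ) ≤ 1 := by
  have h1 : G.dist w' c ≤ G.dist w' w + G.dist w c := hG.dist_triangle
  have h2 : G.dist w' w ≤ 1 := by
    simpa using SimpleGraph.dist_le (Walk.cons h.symm Walk.nil)
  omega

lemma theta_of_dartVal_ne {w w' : V} (h : G.Adj w w') (d : G.Dart)
    (hne : dartVal w d ≠ dartVal w' d) : theta G s(w, w') d.edge := by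
  refine ⟨h, d.edge_mem, w, w', d.fst, d.snd, rfl, rfl, ?_⟩
  simp only [dartVal] at hne
  intro heq
  apply hne
  have c1 : G.dist w d.fst = G.dist d.fst w := SimpleGraph.dist_comm ..
  have c2 : G.dist w d.snd = G.dist d.snd w := SimpleGraph.dist_comm ..
  have c3 : G.dist w' d.fst = G.dist d.fst w' := SimpleGraph.dist_comm ..
  have c4 : G.dist w' d.snd = G.dist d.snd w' := SimpleGraph.dist_comm ..
  omega

lemma theta_of_dartVal_ne' {w w' : V} (h : G.Adj w w') (d : G.Dart)
    (hne : dartVal w d ≠ dartVal w' d) : theta G d.edge s(w, w') := by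
  refine ⟨d.edge_mem, h, d.fst, d.snd, w, w', rfl, rfl, ?_⟩
  simp only [dartVal] at hne
  intro heq
  apply hne
  have c1 : G.dist d.fst w = G.dist w d.fst := SimpleGraph.dist_comm ..
  have c2 : G.dist d.snd w = G.dist w d.snd := SimpleGraph.dist_comm ..
  have c3 : G.dist d.fst w' = G.dist w' d.fst := SimpleGraph.dist_comm ..
  have c4 : G.dist d.snd w' = G.dist w' d.snd := SimpleGraph.dist_comm ..
  omega

section ThetaClosed

variable (Fi : Set (Sym2 V))
variable (hcl : ∀ g h : Sym2 V, theta G g h → g ∈ Fi → h ∈ Fi)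

include hcl in
/-- Across a single edge the `M`-potential changes by at most `2` if the
edge is in `Fi`, and not at all otherwise. -/
lemma mval_step (hG : G.Connected) {x y : V} (P : G.Walk x y) {w w' : V}
    (h : G.Adj w w') :
    mval Fi P.darts w' - mval Fi P.darts w ≤
      (if s(w, w') ∈ Fi then 2 else 0) := by
  by_cases hg : s(w, w') ∈ Fi
  · -- the edge is in Fi: use the telescoping identity
    have key : ∀ z : V, mval Fi P.darts z =
        ((G.dist z x : ℤ) - (G.dist z y : ℤ)) -
          ((P.darts.filter fun d => ¬ d.edge ∈ Fi).map (dartVal z)).sum := by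
      intro z
      have := list_sum_filter_split P.darts (fun d => d.edge ∈ Fi) (dartVal z)
      rw [walk_telescope P z] at this
      simp only [mval]
      omega
    have hsame : ((P.darts.filter fun d => ¬ d.edge ∈ Fi).map (dartVal w')).sum
        = ((P.darts.filter fun d => ¬ d.edge ∈ Fi).map (dartVal w)).sum := by
      have hmapeq : (P.darts.filter fun d => ¬ d.edge ∈ Fi).map (dartVal w')
          = (P.darts.filter fun d => ¬ d.edge ∈ Fi).map (dartVal w) := by
        apply List.map_congr_left
        intro d hd
        have hdn : ¬ d.edge ∈ Fi := by
          have := List.of_mem_filter hd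
          simpa using this
        by_contra hne
        exact hdn (hcl _ _ (theta_of_dartVal_ne h d (Ne.symm hne)) hg)
      rw [hmapeq]
    rw [if_pos hg, key w', key w, hsame]
    have l1 : (G.dist w' x : ℤ) - (G.dist w x : ℤ) ≤ 1 := dist_lip hG h x
    have l2 : (G.dist w y : ℤ) - (G.dist w' y : ℤ) ≤ 1 := dist_lip hG h.symm y
    omega
  · -- the edge is not in Fi: the potential does not change
    rw [if_neg hg]
    have hsame : ((P.darts.filter fun d => d.edge ∈ Fi).map (dartVal w')).sum
        = ((P.darts.filter fun d => d.edge ∈ Fi).map (dartVal w)).sum := by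
      have hmapeq : (P.darts.filter fun d => d.edge ∈ Fi).map (dartVal w')
          = (P.darts.filter fun d => d.edge ∈ Fi).map (dartVal w) := by
        apply List.map_congr_left
        intro d hd
        have hdm : d.edge ∈ Fi := by
          have := List.of_mem_filter hd
          simpa using this
        by_contra hne
        exact hg (hcl _ _ (theta_of_dartVal_ne' h d (Ne.symm hne)) hdm)
      rw [hmapeq]
    simp only [mval]
    omega

include hcl in
lemma mval_walk_le (hG : G.Connected) {x y : V} (P : G.Walk x y)
    {a b : V} (W : G.Walk a b) :
    mval Fi P.darts b - mval Fi P.darts a ≤ 2 * (crossCount Fi W : ℤ) := by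
  induction W with
  | nil => simp
  | @cons a w₂ b h W ih =>
    have hstep := mval_step Fi hcl hG P h
    rw [crossCount_cons]
    by_cases hg : s(a, w₂) ∈ Fi
    · rw [if_pos hg] at hstep ⊢
      push_cast
      omega
    · rw [if_neg hg] at hstep ⊢
      push_cast
      omega

end ThetaClosed

lemma geodesic_tail (hG : G.Connected) {x w y : V} (h : G.Adj x w)
    (W : G.Walk w y) (hP : (Walk.cons h W).length = G.dist x y) :
    W.length = G.dist w y ∧ G.dist x y = G.dist w y + 1 := by
  have h1 : G.dist x y ≤ G.dist x w + G.dist w y := hG.dist_triangle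
  have h2 : G.dist x w ≤ 1 := by
    simpa using SimpleGraph.dist_le (Walk.cons h Walk.nil)
  have h3 : G.dist w y ≤ W.length := SimpleGraph.dist_le W
  simp only [Walk.length_cons] at hP
  omega

lemma geodesic_support_sum (hG : G.Connected) {x y : V} (P : G.Walk x y)
    (hP : P.length = G.dist x y) :
    ∀ c ∈ P.support, G.dist x c + G.dist c y = G.dist x y := by
  induction P with
  | nil =>
    intro c hc
    simp only [Walk.support_nil, List.mem_singleton] at hc
    subst hc
    simp
  | @cons x w y h W ih =>
    intro c hc
    obtain ⟨hlen, hsucc⟩ := geodesic_tail hG h W hP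
    simp only [Walk.support_cons, List.mem_cons] at hc
    rcases hc with rfl | hc
    · simp
    · have hsum := ih hlen c hc
      have h1 : G.dist x c ≤ G.dist x w + G.dist w c := hG.dist_triangle
      have h2 : G.dist x w ≤ 1 := by
        simpa using SimpleGraph.dist_le (Walk.cons h Walk.nil)
      have h3 : G.dist x y ≤ G.dist x c + G.dist c y := hG.dist_triangle
      omega

lemma geodesic_dart_y (hG : G.Connected) {x y : V} (P : G.Walk x y)
    (hP : P.length = G.dist x y) :
    ∀ d ∈ P.darts, G.dist d.snd y + 1 = G.dist d.fst y := by
  induction P with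
  | nil => intro d hd; simp at hd
  | @cons x w y h W ih =>
    intro d hd
    obtain ⟨hlen, hsucc⟩ := geodesic_tail hG h W hP
    simp only [Walk.darts_cons, List.mem_cons] at hd
    rcases hd with rfl | hd
    · simpa using hsucc.symm
    · exact ih hlen d hd

lemma geodesic_dart_x (hG : G.Connected) {x y : V} (P : G.Walk x y)
    (hP : P.length = G.dist x y) :
    ∀ d ∈ P.darts, G.dist x d.snd = G.dist x d.fst + 1 := by
  intro d hd
  have h1 := geodesic_support_sum hG P hP d.fst
    (Walk.dart_fst_mem_support_of_mem_darts P hd)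
  have h2 := geodesic_support_sum hG P hP d.snd
    (Walk.dart_snd_mem_support_of_mem_darts P hd)
  have h3 := geodesic_dart_y hG P hP d hd
  omega

lemma mval_geodesic_left (hG : G.Connected) (Fi : Set (Sym2 V)) {x y : V}
    (P : G.Walk x y) (hP : P.length = G.dist x y) :
    mval Fi P.darts x = -(crossCount Fi P : ℤ) := by
  have := list_sum_map_const (P.darts.filter fun d => d.edge ∈ Fi)
    (dartVal x) (-1) (fun d hd => by
      have hdm := List.mem_of_mem_filter hd
      have := geodesic_dart_x hG P hP d hdm
      simp only [dartVal]
      omega)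
  simp only [mval, crossCount]
  rw [this]
  ring

lemma mval_geodesic_right (hG : G.Connected) (Fi : Set (Sym2 V)) {x y : V}
    (P : G.Walk x y) (hP : P.length = G.dist x y) :
    mval Fi P.darts y = (crossCount Fi P : ℤ) := by
  have := list_sum_map_const (P.darts.filter fun d => d.edge ∈ Fi)
    (dartVal y) 1 (fun d hd => by
      have hdm := List.mem_of_mem_filter hd
      have h3 := geodesic_dart_y hG P hP d hdm
      have c1 : G.dist y d.fst = G.dist d.fst y := SimpleGraph.dist_comm ..
      have c2 : G.dist y d.snd = G.dist d.snd y := SimpleGraph.dist_comm ..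
      simp only [dartVal]
      omega)
  simp only [mval, crossCount]
  rw [this]
  ring

/-- Key counting lemma: every walk between `x` and `y` uses at least as many
`Fi`-edges as a geodesic does, provided `Fi` is closed under `theta`. -/
lemma crossCount_geodesic_le (hG : G.Connected) (Fi : Set (Sym2 V))
    (hcl : ∀ g h : Sym2 V, theta G g h → g ∈ Fi → h ∈ Fi)
    {x y : V} (P : G.Walk x y) (hP : P.length = G.dist x y)
    (W : G.Walk x y) : crossCount Fi P ≤ crossCount Fi W := by
  have h1 := mval_walk_le Fi hcl hG P W
  rw [mval_geodesic_left hG Fi P hP, mval_geodesic_right hG Fi P hP] at h1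
  omega

section Quotient

variable (Fi : Set (Sym2 V))

lemma comp_eq_of_not_mem {a b : V} (h : G.Adj a b) (hnot : s(a, b) ∉ Fi) :
    ((G.deleteEdges Fi).connectedComponentMk a) = ((G.deleteEdges Fi).connectedComponentMk b) := by
  apply SimpleGraph.ConnectedComponent.sound
  exact SimpleGraph.Adj.reachable (by
    rw [SimpleGraph.deleteEdges_adj]
    exact ⟨h, hnot⟩)

lemma project_walk {a b : V} (W : G.Walk a b) :
    ∃ q : (quotientGraph G Fi).Walk (((G.deleteEdges Fi).connectedComponentMk a)) (((G.deleteEdges Fi).connectedComponentMk b)),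
      q.length ≤ crossCount Fi W := by
  induction W with
  | nil => exact ⟨Walk.nil, by simp⟩
  | @cons a w₂ b h W ih =>
    obtain ⟨q, hq⟩ := ih
    rw [crossCount_cons]
    by_cases hc : ((G.deleteEdges Fi).connectedComponentMk a) = ((G.deleteEdges Fi).connectedComponentMk w₂)
    · refine ⟨q.copy hc.symm rfl, ?_⟩
      rw [SimpleGraph.Walk.length_copy]
      split_ifs <;> omega
    · have hmem : s(a, w₂) ∈ Fi := by
        by_contra hnot
        exact hc (comp_eq_of_not_mem Fi h hnot)
      refine ⟨Walk.cons ⟨hc, a, w₂, rfl, rfl, h⟩ q, ?_⟩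
      rw [if_pos hmem]
      show q.length + 1 ≤ _
      omega

lemma lift_zero {a b : V} (p : (G.deleteEdges Fi).Walk a b) :
    ∃ W : G.Walk a b, crossCount Fi W = 0 := by
  induction p with
  | nil => exact ⟨Walk.nil, by simp [crossCount]⟩
  | @cons a w₂ b h p ih =>
    obtain ⟨W, hW⟩ := ih
    rw [SimpleGraph.deleteEdges_adj] at h
    refine ⟨Walk.cons h.1 W, ?_⟩
    rw [crossCount_cons, if_neg h.2, hW]

lemma lift_walk {X Y : (G.deleteEdges Fi).ConnectedComponent}
    (qw : (quotientGraph G Fi).Walk X Y) :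
    ∀ x y : V, ((G.deleteEdges Fi).connectedComponentMk x) = X → ((G.deleteEdges Fi).connectedComponentMk y) = Y →
      ∃ W : G.Walk x y, crossCount Fi W ≤ qw.length := by
  induction qw with
  | nil =>
    intro x y hx hy
    obtain ⟨p⟩ := SimpleGraph.ConnectedComponent.exact (hx.trans hy.symm)
    obtain ⟨W, hW⟩ := lift_zero Fi p
    exact ⟨W, by simp [hW]⟩
  | @cons X X₁ Y hadj qw ih =>
    intro x y hx hy
    obtain ⟨hne, w₁, w₂, h1, h2, hG12⟩ := hadj
    obtain ⟨p⟩ := SimpleGraph.ConnectedComponent.exact (hx.trans h1.symm)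
    obtain ⟨W₀, hW₀⟩ := lift_zero Fi p
    obtain ⟨W₂, hW₂⟩ := ih w₂ y h2 hy
    refine ⟨W₀.append (Walk.cons hG12 W₂), ?_⟩
    have happ : crossCount Fi (W₀.append (Walk.cons hG12 W₂)) =
        crossCount Fi W₀ + crossCount Fi (Walk.cons hG12 W₂) := by
      simp [crossCount, Walk.darts_append, List.filter_append]
    rw [happ, hW₀, crossCount_cons]
    show _ ≤ qw.length + 1
    split_ifs <;> omega

/-- The distance in the quotient graph equals the number of `Fi`-edges on any
geodesic. -/
lemma quotient_dist_eq (hG : G.Connected)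
    (hcl : ∀ g h : Sym2 V, theta G g h → g ∈ Fi → h ∈ Fi)
    {x y : V} (P : G.Walk x y) (hP : P.length = G.dist x y) :
    (quotientGraph G Fi).dist (((G.deleteEdges Fi).connectedComponentMk x)) (((G.deleteEdges Fi).connectedComponentMk y)) = crossCount Fi P := by
  obtain ⟨q, hq⟩ := project_walk Fi P
  have hle : (quotientGraph G Fi).dist (((G.deleteEdges Fi).connectedComponentMk x)) (((G.deleteEdges Fi).connectedComponentMk y)) ≤ crossCount Fi P :=
    (SimpleGraph.dist_le q).trans hq
  have hreach : (quotientGraph G Fi).Reachable (((G.deleteEdges Fi).connectedComponentMk x)) (((G.deleteEdges Fi).connectedComponentMk y)) := ⟨q⟩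
  obtain ⟨qw, hqw⟩ := hreach.exists_walk_length_eq_dist
  obtain ⟨W, hW⟩ := lift_walk Fi qw x y rfl rfl
  have hge := crossCount_geodesic_le hG Fi hcl P hP W
  omega

end Quotient

end CutHelpers

/-- if `{F₁, …, F_k}` is a c-partition of the edge set of a finite
connected graph `G` and `e = uv ∈ F_i`, then `N_u(e|G)` is the union of the
vertex sets of the components in `N_U(E|G_i)`, and symmetrically for `v`,
where `U = ℓ_i(u)`, `V = ℓ_i(v)` and `E = UV` in `G_i = G/F_i`. -/
theorem N_eq_iUnion_components {V : Type*} [Fintype V] (G : SimpleGraph V)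
    (hG : G.Connected) {k : ℕ} (F : Fin k → Set (Sym2 V))
    (hF : IsCPartition G F) (i : Fin k) (u v : V) (he : s(u, v) ∈ F i) :
    ({x : V | G.dist x u < G.dist x v} =
      ⋃ X ∈ {X : (G.deleteEdges (F i)).ConnectedComponent |
          (quotientGraph G (F i)).dist X
              ((G.deleteEdges (F i)).connectedComponentMk u) <
            (quotientGraph G (F i)).dist X
              ((G.deleteEdges (F i)).connectedComponentMk v)},
        {x : V | (G.deleteEdges (F i)).connectedComponentMk x = X}) ∧
    ({x : V | G.dist x v < G.dist x u} =
      ⋃ X ∈ {X : (G.deleteEdges (F i)).ConnectedComponent |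
          (quotientGraph G (F i)).dist X
              ((G.deleteEdges (F i)).connectedComponentMk v) <
            (quotientGraph G (F i)).dist X
              ((G.deleteEdges (F i)).connectedComponentMk u)},
        {x : V | (G.deleteEdges (F i)).connectedComponentMk x = X}) := by
  classical
  obtain ⟨⟨hsub, hex, hdisj⟩, hclosure⟩ := hF
  have hcl : ∀ j : Fin k, ∀ g h : Sym2 V, theta G g h → g ∈ F j → h ∈ F j :=
    fun j g h t hg => hclosure g h (Relation.TransGen.single t) j hg
  have hadj : G.Adj u v := G.mem_edgeSet.mp (hsub i he)
  have hjuv : ∀ j : Fin k, j ≠ i →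
      (G.deleteEdges (F j)).connectedComponentMk u =
        (G.deleteEdges (F j)).connectedComponentMk v := by
    intro j hj
    apply comp_eq_of_not_mem (F j) hadj
    intro hmem
    exact Set.disjoint_left.mp (hdisj j i hj) hmem he
  have hsum : ∀ {a b : V} (W : G.Walk a b),
      ∑ j : Fin k, crossCount (F j) W = W.length := by
    intro a b W
    induction W with
    | nil => simp [crossCount]
    | @cons a w₂ b h W ih =>
      have hone : (∑ j : Fin k, if s(a, w₂) ∈ F j then 1 else 0) = 1 := by
        obtain ⟨j₀, hj₀⟩ := hex s(a, w₂) (G.mem_edgeSet.mpr h)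
        rw [Finset.sum_eq_single j₀]
        · rw [if_pos hj₀]
        · intro j _ hne
          rw [if_neg]
          intro hmem
          exact Set.disjoint_left.mp (hdisj j j₀ hne) hmem hj₀
        · intro hni
          exact absurd (Finset.mem_univ j₀) hni
      have : ∀ j : Fin k, crossCount (F j) (Walk.cons h W) =
          (if s(a, w₂) ∈ F j then 1 else 0) + crossCount (F j) W :=
        fun j => crossCount_cons (F j) h W
      simp only [this, Finset.sum_add_distrib, hone, ih, Walk.length_cons]
      omega
  have key : ∀ x : V,
      G.dist x u + (quotientGraph G (F i)).dist
          ((G.deleteEdges (F i)).connectedComponentMk x)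
          ((G.deleteEdges (F i)).connectedComponentMk v)
        = G.dist x v + (quotientGraph G (F i)).dist
          ((G.deleteEdges (F i)).connectedComponentMk x)
          ((G.deleteEdges (F i)).connectedComponentMk u) := by
    intro x
    obtain ⟨pu, hpu⟩ := (hG.preconnected x u).exists_walk_length_eq_dist
    obtain ⟨pv, hpv⟩ := (hG.preconnected x v).exists_walk_length_eq_dist
    have hxu : G.dist x u = ∑ j : Fin k, (quotientGraph G (F j)).dist
        ((G.deleteEdges (F j)).connectedComponentMk x)
        ((G.deleteEdges (F j)).connectedComponentMk u) := by
      calc G.dist x u = pu.length := hpu.symm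
        _ = ∑ j : Fin k, crossCount (F j) pu := (hsum pu).symm
        _ = _ := Finset.sum_congr rfl
            (fun j _ => (quotient_dist_eq (F j) hG (hcl j) pu hpu).symm)
    have hxv : G.dist x v = ∑ j : Fin k, (quotientGraph G (F j)).dist
        ((G.deleteEdges (F j)).connectedComponentMk x)
        ((G.deleteEdges (F j)).connectedComponentMk v) := by
      calc G.dist x v = pv.length := hpv.symm
        _ = ∑ j : Fin k, crossCount (F j) pv := (hsum pv).symm
        _ = _ := Finset.sum_congr rfl
            (fun j _ => (quotient_dist_eq (F j) hG (hcl j) pv hpv).symm)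
    have hsplitu : (quotientGraph G (F i)).dist
          ((G.deleteEdges (F i)).connectedComponentMk x)
          ((G.deleteEdges (F i)).connectedComponentMk u)
        + ∑ j ∈ Finset.univ.erase i, (quotientGraph G (F j)).dist
          ((G.deleteEdges (F j)).connectedComponentMk x)
          ((G.deleteEdges (F j)).connectedComponentMk u)
        = ∑ j : Fin k, (quotientGraph G (F j)).dist
          ((G.deleteEdges (F j)).connectedComponentMk x)
          ((G.deleteEdges (F j)).connectedComponentMk u) :=
      Finset.add_sum_erase Finset.univ (fun j : Fin k =>
        (quotientGraph G (F j)).dist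
          ((G.deleteEdges (F j)).connectedComponentMk x)
          ((G.deleteEdges (F j)).connectedComponentMk u)) (Finset.mem_univ i)
    have hsplitv : (quotientGraph G (F i)).dist
          ((G.deleteEdges (F i)).connectedComponentMk x)
          ((G.deleteEdges (F i)).connectedComponentMk v)
        + ∑ j ∈ Finset.univ.erase i, (quotientGraph G (F j)).dist
          ((G.deleteEdges (F j)).connectedComponentMk x)
          ((G.deleteEdges (F j)).connectedComponentMk v)
        = ∑ j : Fin k, (quotientGraph G (F j)).dist
          ((G.deleteEdges (F j)).connectedComponentMk x)
          ((G.deleteEdges (F j)).connectedComponentMk v) :=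
      Finset.add_sum_erase Finset.univ (fun j : Fin k =>
        (quotientGraph G (F j)).dist
          ((G.deleteEdges (F j)).connectedComponentMk x)
          ((G.deleteEdges (F j)).connectedComponentMk v)) (Finset.mem_univ i)
    have herase : ∑ j ∈ Finset.univ.erase i, (quotientGraph G (F j)).dist
          ((G.deleteEdges (F j)).connectedComponentMk x)
          ((G.deleteEdges (F j)).connectedComponentMk u)
        = ∑ j ∈ Finset.univ.erase i, (quotientGraph G (F j)).dist
          ((G.deleteEdges (F j)).connectedComponentMk x)
          ((G.deleteEdges (F j)).connectedComponentMk v) :=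
      Finset.sum_congr rfl (fun j hj => by
        rw [hjuv j (Finset.mem_erase.mp hj).1])
    omega
  constructor
  · ext x
    simp only [Set.mem_setOf_eq, Set.mem_iUnion]
    constructor
    · intro hlt
      have hq : (quotientGraph G (F i)).dist
          ((G.deleteEdges (F i)).connectedComponentMk x)
          ((G.deleteEdges (F i)).connectedComponentMk u) <
        (quotientGraph G (F i)).dist
          ((G.deleteEdges (F i)).connectedComponentMk x)
          ((G.deleteEdges (F i)).connectedComponentMk v) := by
        have := key x; omega
      exact ⟨(G.deleteEdges (F i)).connectedComponentMk x, hq, rfl⟩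
    · rintro ⟨X, hX, rfl⟩
      have hq : (quotientGraph G (F i)).dist
          ((G.deleteEdges (F i)).connectedComponentMk x)
          ((G.deleteEdges (F i)).connectedComponentMk u) <
        (quotientGraph G (F i)).dist
          ((G.deleteEdges (F i)).connectedComponentMk x)
          ((G.deleteEdges (F i)).connectedComponentMk v) := hX
      have := key x
      omega
  · ext x
    simp only [Set.mem_setOf_eq, Set.mem_iUnion]
    constructor
    · intro hlt
      have hq : (quotientGraph G (F i)).dist
          ((G.deleteEdges (F i)).connectedComponentMk x)
          ((G.deleteEdges (F i)).connectedComponentMk v) <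
        (quotientGraph G (F i)).dist
          ((G.deleteEdges (F i)).connectedComponentMk x)
          ((G.deleteEdges (F i)).connectedComponentMk u) := by
        have := key x; omega
      exact ⟨(G.deleteEdges (F i)).connectedComponentMk x, hq, rfl⟩
    · rintro ⟨X, hX, rfl⟩
      have hq : (quotientGraph G (F i)).dist
          ((G.deleteEdges (F i)).connectedComponentMk x)
          ((G.deleteEdges (F i)).connectedComponentMk v) <
        (quotientGraph G (F i)).dist
          ((G.deleteEdges (F i)).connectedComponentMk x)
          ((G.deleteEdges (F i)).connectedComponentMk u) := hX
      have := key x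
      omega
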